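/- Suppose C_I < βA/((μ+r)(μ+r+ρ)) and C_I ≤ (μ²/(μ+r))·(√(β/(μσm) + 1/σs) − √(1/σs))². Define E* = ((μ+β+ρ)/σm, μ(R0−1)/σm, μβ(R0−1)/(σm(μ+r))) and, for i = 1, 2, Ei = (Si, μR0/σm − μSi/(μ+β+ρ), βR0/σm − βSi/(μ+β+ρ) − rC_I/μ) with S1 = ((μ+β+ρ)/(2σm))(R0 − p + q − √D1), S2 = ((μ+β+ρ)/(2σm))(R0 − p + q + √D1), D1 = (R0−p−q)² − 4pq. Then: if (√p+√q)² ≤ R0 ≤ 1, the set of endemic equilibria equals {E1, E2} (E* is not an endemic equilibrium); if 1 < R0 < 1 + M, it equals {E*, E1, E2}; if R0 = 1 + M, it equals {E*, E1}; and if R0 > 1 + M, it equals {E1}. -/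

import Mathlib

set_option maxHeartbeats 1600000

private lemma aux_hkey' (M s : ℝ) (hM0 : 0 < M) (hs0 : 0 < s) (hs1 : s < 1)
    (hstep : M * (1 + s) ≤ 1 - s) : M * (1 + s^2) < 1 - s^2 := by
  nlinarith [mul_le_mul_of_nonneg_left hstep hs0.le, mul_pos hM0 hs0]

private lemma aux_expand (p q R0 sp sq : ℝ) (hsp : sp^2 = p) (hsq : sq^2 = q)
    (h : (sp + sq)^2 ≤ R0) : p + q + 2*(sp*sq) ≤ R0 := by nlinarith [h]

private lemma aux_D1nn (p q R0 D1 sp sq : ℝ) (hsp : sp^2 = p) (hsq : sq^2 = q)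
    (hspn : 0 ≤ sp) (hsqn : 0 ≤ sq) (hD1 : D1 = (R0 - p - q)^2 - 4*p*q)
    (h : p + q + 2*(sp*sq) ≤ R0) : 0 ≤ D1 := by
  nlinarith [mul_nonneg hspn hsqn, sq_nonneg (R0 - p - q - 2*(sp*sq)),
    mul_nonneg (mul_nonneg hspn hsqn) (show 0 ≤ R0 - p - q - 2*(sp*sq) by nlinarith [mul_nonneg hspn hsqn])]

private lemma aux_g1 (M q p R0 sp sq : ℝ) (hq0 : 0 < q) (hM0 : 0 < M)
    (hsp : sp^2 = p) (hsq : sq^2 = q) (hspn : 0 ≤ sp) (hsqn : 0 ≤ sq)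
    (hpMq : p = M*(1-q)) (hqM : q*M < 1-q)
    (h : p + q + 2*(sp*sq) ≤ R0) : 0 < R0 - M - M*q - q := by
  have h1 : (q*M)^2 < (sp*sq)^2 := by
    nlinarith [mul_lt_mul_of_pos_left hqM (mul_pos hq0 hM0), hsp, hsq, hpMq]
  have h2 : q*M < sp*sq := by
    nlinarith [h1, mul_nonneg hspn hsqn, mul_pos hq0 hM0]
  nlinarith [h, h2, hpMq]

private lemma aux_sq1 (a b R0 : ℝ) (h : a + b ≤ 1) (ha : 0 ≤ a) (hb : 0 ≤ b)
    (h2 : 1 < R0) : (a + b)^2 ≤ R0 := by nlinarith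

/-- An endemic equilibrium of the disease-severity-structured model. -/
def IsEndemicEquilibrium (A μ ρ r β σm σs CI : ℝ) (x : ℝ × ℝ × ℝ) : Prop :=
  0 < x.1 ∧ 0 < x.2.1 ∧ 0 < x.2.2 ∧
  A - σm * x.1 * x.2.1 - σs * x.1 * max 0 (x.2.2 - CI) - μ * x.1 = 0 ∧
  σm * x.1 * x.2.1 + σs * x.1 * max 0 (x.2.2 - CI) - (μ + β + ρ) * x.2.1 = 0 ∧
  β * x.2.1 - min (r * x.2.2) (r * CI) - μ * x.2.2 = 0

/-- Theorem 2.3 of the paper. -/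
theorem stmt12 (A μ ρ r β σm σs CI : ℝ)
    (hA : 0 < A) (hμ : 0 < μ) (hρ : 0 < ρ) (hr : 0 < r) (hβ : 0 < β)
    (hσm : 0 < σm) (hσs : 0 < σs) (hCI : 0 < CI)
    (R0 p q M : ℝ)
    (hR0 : R0 = A * σm / (μ * (μ + β + ρ)))
    (hp : p = (μ + r) * σm * σs * CI / (μ * (μ * σm + β * σs)))
    (hq : q = μ * σm / (μ * σm + β * σs))
    (hM : M = σm * (μ + r) * CI / (μ * β))
    (hsmall : CI < β * A / ((μ + r) * (μ + r + ρ)))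
    (hlow : CI ≤ μ ^ 2 / (μ + r)
      * (Real.sqrt (β / (μ * σm) + 1 / σs) - Real.sqrt (1 / σs)) ^ 2)
    (D1 S1 S2 : ℝ)
    (hD1 : D1 = (R0 - p - q) ^ 2 - 4 * p * q)
    (hS1 : S1 = (μ + β + ρ) / (2 * σm) * (R0 - p + q - Real.sqrt D1))
    (hS2 : S2 = (μ + β + ρ) / (2 * σm) * (R0 - p + q + Real.sqrt D1))
    (Estar E1 E2 : ℝ × ℝ × ℝ)
    (hEstar : Estar = ((μ + β + ρ) / σm, μ * (R0 - 1) / σm,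
      μ * β * (R0 - 1) / (σm * (μ + r))))
    (hE1 : E1 = (S1, μ * R0 / σm - μ * S1 / (μ + β + ρ),
      β * R0 / σm - β * S1 / (μ + β + ρ) - r * CI / μ))
    (hE2 : E2 = (S2, μ * R0 / σm - μ * S2 / (μ + β + ρ),
      β * R0 / σm - β * S2 / (μ + β + ρ) - r * CI / μ)) :
    ((Real.sqrt p + Real.sqrt q) ^ 2 ≤ R0 → R0 ≤ 1 →
      {x : ℝ × ℝ × ℝ | IsEndemicEquilibrium A μ ρ r β σm σs CI x} = {E1, E2} ∧
      ¬ IsEndemicEquilibrium A μ ρ r β σm σs CI Estar) ∧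
    (1 < R0 → R0 < 1 + M →
      {x : ℝ × ℝ × ℝ | IsEndemicEquilibrium A μ ρ r β σm σs CI x}
        = {Estar, E1, E2}) ∧
    (R0 = 1 + M →
      {x : ℝ × ℝ × ℝ | IsEndemicEquilibrium A μ ρ r β σm σs CI x}
        = {Estar, E1}) ∧
    (R0 > 1 + M →
      {x : ℝ × ℝ × ℝ | IsEndemicEquilibrium A μ ρ r β σm σs CI x} = {E1}) := by
  have hK : (0:ℝ) < μ + β + ρ := by linarith
  have hB : (0:ℝ) < μ * σm + β * σs := by positivity
  have hμr : (0:ℝ) < μ + r := by linarith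
  have hq0 : 0 < q := by rw [hq]; positivity
  have hq1 : q < 1 := by
    rw [hq, div_lt_one hB]; linarith [mul_pos hβ hσs]
  have hp0 : 0 < p := by rw [hp]; positivity
  have hM0 : 0 < M := by rw [hM]; positivity
  have hR0pos : 0 < R0 := by rw [hR0]; positivity
  have hpMq : p = M * (1 - q) := by rw [hp, hM, hq]; field_simp <;> ring
  have hA2 : A * σm = R0 * (μ * (μ + β + ρ)) := by rw [hR0]; field_simp <;> ring
  have hAval : A = R0 * (μ * (μ + β + ρ)) / σm := by
    rw [eq_div_iff hσm.ne']; linarith [hA2]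
  have hMμβ : M * (μ * β) = σm * (μ + r) * CI := by rw [hM]; field_simp <;> ring
  -- `sqrt p + sqrt q ≤ 1` from hlow
  have hpq1 : Real.sqrt p + Real.sqrt q ≤ 1 ∧ M * (1 + q) < 1 - q := by
    clear hsmall hD1 hS1 hS2 hEstar hE1 hE2 hR0 hA2 hAval
    set u := Real.sqrt (μ * σm) with hu
    set v := Real.sqrt (μ * σm + β * σs) with hv
    set w := Real.sqrt (μ * σm * σs) with hw
    have hu2 : u^2 = μ * σm := Real.sq_sqrt (by positivity)
    have hv2 : v^2 = μ * σm + β * σs := Real.sq_sqrt (by positivity)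
    have hw2 : w^2 = μ * σm * σs := Real.sq_sqrt (by positivity)
    have hv0 : 0 < v := Real.sqrt_pos.2 hB
    have hw0 : 0 < w := Real.sqrt_pos.2 (by positivity)
    have hun : 0 ≤ u := Real.sqrt_nonneg _
    have hsqq : Real.sqrt q = u / v := by
      rw [hq, Real.sqrt_div (by positivity)]
    have ha : Real.sqrt (β / (μ * σm) + 1 / σs) = v / w := by
      rw [show β / (μ * σm) + 1 / σs = (μ * σm + β * σs) / (μ * σm * σs) by
        field_simp <;> ring, Real.sqrt_div (by positivity)]
    have hb : Real.sqrt (1 / σs) = u / w := by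
      rw [show (1:ℝ) / σs = (μ * σm) / (μ * σm * σs) by field_simp <;> ring,
        Real.sqrt_div (by positivity)]
    rw [ha, hb, div_sub_div_same, div_pow, hw2] at hlow
    have key : CI * ((μ + r) * (μ * σm * σs)) ≤ μ^2 * (v - u)^2 := by
      have h := mul_le_mul_of_nonneg_right hlow
        (show (0:ℝ) ≤ (μ + r) * (μ * σm * σs) by positivity)
      calc CI * ((μ + r) * (μ * σm * σs))
          ≤ μ ^ 2 / (μ + r) * ((v - u) ^ 2 / (μ * σm * σs)) * ((μ + r) * (μ * σm * σs)) := h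
        _ = μ^2 * (v - u)^2 := by field_simp <;> ring
    have hple : p ≤ (1 - Real.sqrt q)^2 := by
      rw [hp, hsqq, div_le_iff₀ (by positivity : (0:ℝ) < μ * (μ * σm + β * σs))]
      have hexp : (1 - u/v)^2 * (μ * (μ * σm + β * σs)) = μ * (v - u)^2 := by
        calc (1 - u/v)^2 * (μ * (μ * σm + β * σs)) = (1 - u/v)^2 * (μ * v^2) := by rw [hv2]
          _ = μ * (v - u)^2 := by field_simp
      rw [hexp]
      have h2 : μ * ((μ + r) * σm * σs * CI) ≤ μ * (μ * (v - u)^2) := by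
        calc μ * ((μ + r) * σm * σs * CI) = CI * ((μ + r) * (μ * σm * σs)) := by ring
          _ ≤ μ^2 * (v - u)^2 := key
          _ = μ * (μ * (v - u)^2) := by ring
      exact le_of_mul_le_mul_left h2 hμ
    have hultv : u < v := by
      rw [hu, hv]
      exact Real.sqrt_lt_sqrt (by positivity) (by linarith [mul_pos hβ hσs])
    have hsq1 : Real.sqrt q < 1 := by rw [hsqq, div_lt_one hv0]; exact hultv
    have hsqpos : 0 < Real.sqrt q := Real.sqrt_pos.2 hq0
    have hq2 : (Real.sqrt q)^2 = q := Real.sq_sqrt hq0.le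
    constructor
    · have h1 : Real.sqrt p ≤ 1 - Real.sqrt q := by
        calc Real.sqrt p ≤ Real.sqrt ((1 - Real.sqrt q)^2) := Real.sqrt_le_sqrt hple
          _ = 1 - Real.sqrt q := Real.sqrt_sq (by linarith)
      linarith
    · have hstep : M * (1 + Real.sqrt q) ≤ 1 - Real.sqrt q := by
        refine le_of_mul_le_mul_left ?_ (show (0:ℝ) < 1 - Real.sqrt q by linarith)
        calc (1 - Real.sqrt q) * (M * (1 + Real.sqrt q)) = M * (1 - (Real.sqrt q)^2) := by ring
          _ = M * (1 - q) := by rw [hq2]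
          _ = p := hpMq.symm
          _ ≤ (1 - Real.sqrt q)^2 := hple
          _ = (1 - Real.sqrt q) * (1 - Real.sqrt q) := by ring
      have := aux_hkey' M (Real.sqrt q) hM0 hsqpos hsq1 hstep
      rw [hq2] at this; exact this
  obtain ⟨hpq1, hkey⟩ := hpq1
  have hqM : q * M < 1 - q := by linarith [hkey, hM0]
  have hD1e : D1 = (R0 - p + q)^2 - 4*(R0*q) := by rw [hD1]; ring

  -- characterization of endemic equilibria
  have hchar : ∀ x : ℝ × ℝ × ℝ, IsEndemicEquilibrium A μ ρ r β σm σs CI x ↔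
      ((x = Estar ∧ 1 < R0 ∧ R0 ≤ 1 + M) ∨
       (∃ S : ℝ, 0 < S ∧ σm * S < (μ + β + ρ) * (R0 - M) ∧
         (σm * S)^2 - (μ + β + ρ) * (R0 - p + q) * (σm * S)
           + (μ + β + ρ)^2 * (R0 * q) = 0 ∧
         x = (S, μ * R0 / σm - μ * S / (μ + β + ρ),
           β * R0 / σm - β * S / (μ + β + ρ) - r * CI / μ))) := by
    have hE : ∀ S : ℝ, A - μ * S - (μ + β + ρ) * (μ * R0 / σm - μ * S / (μ + β + ρ)) = 0 := by
      intro S; rw [hAval]; field_simp; ring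
    have he3id : ∀ S : ℝ, β * (μ * R0 / σm - μ * S / (μ + β + ρ)) - r * CI
        - μ * (β * R0 / σm - β * S / (μ + β + ρ) - r * CI / μ) = 0 := by
      intro S; field_simp <;> ring
    have hid : ∀ S : ℝ, (β * R0 / σm - β * S / (μ + β + ρ) - r * CI / μ) - CI
        = β / (σm * (μ + β + ρ)) * ((μ + β + ρ) * (R0 - M) - σm * S) := by
      intro S; rw [hM]; field_simp; ring
    have hImid : ∀ S : ℝ, μ * R0 / σm - μ * S / (μ + β + ρ)
        = μ / (σm * (μ + β + ρ)) * ((μ + β + ρ) * R0 - σm * S) := by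
      intro S; field_simp
    have hF2 : ∀ S : ℝ, (σm^2 * (μ * (μ + β + ρ)))
        * (σm * S * (μ * R0 / σm - μ * S / (μ + β + ρ))
          + σs * S * ((β * R0 / σm - β * S / (μ + β + ρ) - r * CI / μ) - CI)
          - (μ + β + ρ) * (μ * R0 / σm - μ * S / (μ + β + ρ)))
        = -(μ * (μ * σm + β * σs)) * ((σm * S)^2
            - (μ + β + ρ) * (R0 - p + q) * (σm * S) + (μ + β + ρ)^2 * (R0 * q)) := by
      intro S; rw [hp, hq]; field_simp; ring
    intro x
    constructor
    · rintro hx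
      obtain ⟨S, Im, Is⟩ := x
      obtain ⟨hS, hIm, hIs, e1, e2, e3⟩ := hx
      dsimp only at hS hIm hIs e1 e2 e3
      by_cases hc : Is ≤ CI
      · -- mild branch
        left
        rw [max_eq_left (by linarith : Is - CI ≤ 0)] at e1 e2
        rw [min_eq_left (mul_le_mul_of_nonneg_left hc hr.le)] at e3
        have hsS : σm * S = μ + β + ρ := by
          have h0 : (σm * S - (μ + β + ρ)) * Im = 0 := by linarith [e2]
          rcases mul_eq_zero.mp h0 with h | h
          · linarith
          · exact absurd h (ne_of_gt hIm)
        have hImσ : Im * σm = μ * (R0 - 1) := by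
          refine mul_left_cancel₀ (ne_of_gt hK) ?_
          have hImK : (μ + β + ρ) * Im = A - μ * S := by
            linear_combination -e1 - Im * hsS
          linear_combination σm * hImK - μ * hsS + hA2
        have hIsσ : Is * (σm * (μ + r)) = μ * β * (R0 - 1) := by
          linear_combination (-σm) * e3 + β * hImσ
        have hR0gt : 1 < R0 := by
          have h := mul_pos hIm hσm
          rw [hImσ] at h
          nlinarith [h, hμ]
        have hR0le : R0 ≤ 1 + M := by
          have h1 : Is * (σm * (μ + r)) ≤ CI * (σm * (μ + r)) := by
            have := mul_le_mul_of_nonneg_right hc (by positivity : (0:ℝ) ≤ σm * (μ + r))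
            linarith
          have h2 : μ * β * (R0 - 1) ≤ M * (μ * β) := by linarith [h1, hIsσ, hMμβ]
          by_contra h3
          push_neg at h3
          have h4 := mul_lt_mul_of_pos_left (show M < R0 - 1 by linarith) (mul_pos hμ hβ)
          linarith [h2, h4]
        refine ⟨?_, hR0gt, hR0le⟩
        rw [hEstar]
        simp only [Prod.mk.injEq]
        refine ⟨?_, ?_, ?_⟩
        · rw [eq_div_iff (ne_of_gt hσm)]; linarith [hsS]
        · rw [eq_div_iff (ne_of_gt hσm)]; linarith [hImσ]
        · rw [eq_div_iff (by positivity : σm * (μ + r) ≠ 0)]; linarith [hIsσ]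
      · -- severe branch
        right
        push_neg at hc
        rw [max_eq_right (by linarith : (0:ℝ) ≤ Is - CI)] at e1 e2
        rw [min_eq_right (mul_le_mul_of_nonneg_left hc.le hr.le)] at e3
        have hImK : (μ + β + ρ) * Im = A - μ * S := by linarith [e1, e2]
        have hIm' : Im = μ * R0 / σm - μ * S / (μ + β + ρ) := by
          refine mul_left_cancel₀ (ne_of_gt hK) ?_
          rw [hImK]
          linear_combination hE S
        have hIs' : Is = β * R0 / σm - β * S / (μ + β + ρ) - r * CI / μ := by
          refine mul_left_cancel₀ (ne_of_gt hμ) ?_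
          have h1 : μ * Is = β * Im - r * CI := by linarith [e3]
          rw [h1, hIm']
          linear_combination he3id S
        refine ⟨S, hS, ?_, ?_, ?_⟩
        · have h2 : 0 < β / (σm * (μ + β + ρ)) * ((μ + β + ρ) * (R0 - M) - σm * S) := by
            rw [← hid S]; rw [hIs'] at hc; linarith
          by_contra hcon
          push_neg at hcon
          linarith [h2, mul_nonpos_of_nonneg_of_nonpos
            (le_of_lt (show (0:ℝ) < β / (σm * (μ + β + ρ)) by positivity))
            (by linarith : (μ + β + ρ) * (R0 - M) - σm * S ≤ 0)]
        · rw [hIm', hIs'] at e2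
          have h := hF2 S
          rw [e2, mul_zero] at h
          rcases mul_eq_zero.mp h.symm with h4 | h4
          · exact absurd h4 (neg_ne_zero.2 (by positivity))
          · exact h4
        · rw [hIm', hIs']
    · rintro (⟨rfl, hR0gt, hR0le⟩ | ⟨S, hSpos, hSlt, hQ, rfl⟩)
      · rw [hEstar]
        have hIsle : μ * β * (R0 - 1) / (σm * (μ + r)) ≤ CI := by
          rw [div_le_iff₀ (by positivity : (0:ℝ) < σm * (μ + r))]
          linarith [hMμβ, mul_le_mul_of_nonneg_right
            (show R0 - 1 ≤ M by linarith) (le_of_lt (mul_pos hμ hβ))]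
        refine ⟨by positivity, ?_, ?_, ?_, ?_, ?_⟩
        · exact div_pos (mul_pos hμ (by linarith)) hσm
        · exact div_pos (mul_pos (mul_pos hμ hβ) (by linarith)) (by positivity)
        · show A - σm * ((μ + β + ρ) / σm) * (μ * (R0 - 1) / σm)
            - σs * ((μ + β + ρ) / σm) * max 0 (μ * β * (R0 - 1) / (σm * (μ + r)) - CI)
            - μ * ((μ + β + ρ) / σm) = 0
          rw [max_eq_left (by linarith : μ * β * (R0 - 1) / (σm * (μ + r)) - CI ≤ 0)]
          rw [hAval]; field_simp; ring
        · show σm * ((μ + β + ρ) / σm) * (μ * (R0 - 1) / σm)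
            + σs * ((μ + β + ρ) / σm) * max 0 (μ * β * (R0 - 1) / (σm * (μ + r)) - CI)
            - (μ + β + ρ) * (μ * (R0 - 1) / σm) = 0
          rw [max_eq_left (by linarith : μ * β * (R0 - 1) / (σm * (μ + r)) - CI ≤ 0)]
          field_simp; ring
        · show β * (μ * (R0 - 1) / σm)
            - min (r * (μ * β * (R0 - 1) / (σm * (μ + r)))) (r * CI)
            - μ * (μ * β * (R0 - 1) / (σm * (μ + r))) = 0
          rw [min_eq_left (mul_le_mul_of_nonneg_left hIsle hr.le)]
          field_simp; ring
      · have hIsgt : CI < β * R0 / σm - β * S / (μ + β + ρ) - r * CI / μ := by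
          have h2 : 0 < β / (σm * (μ + β + ρ)) * ((μ + β + ρ) * (R0 - M) - σm * S) := by
            apply mul_pos (by positivity); linarith
          linarith [hid S, h2]
        have hImpos : 0 < μ * R0 / σm - μ * S / (μ + β + ρ) := by
          rw [hImid S]
          apply mul_pos (by positivity)
          linarith [hSlt, mul_pos hK hM0]
        refine ⟨hSpos, hImpos, by linarith, ?_, ?_, ?_⟩
        · show A - σm * S * (μ * R0 / σm - μ * S / (μ + β + ρ))
            - σs * S * max 0 ((β * R0 / σm - β * S / (μ + β + ρ) - r * CI / μ) - CI)
            - μ * S = 0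
          rw [max_eq_right (by linarith : (0:ℝ) ≤ (β * R0 / σm - β * S / (μ + β + ρ) - r * CI / μ) - CI)]
          have he2 : σm * S * (μ * R0 / σm - μ * S / (μ + β + ρ))
              + σs * S * ((β * R0 / σm - β * S / (μ + β + ρ) - r * CI / μ) - CI)
              - (μ + β + ρ) * (μ * R0 / σm - μ * S / (μ + β + ρ)) = 0 := by
            have h := hF2 S
            rw [hQ, mul_zero] at h
            rcases mul_eq_zero.mp h with h4 | h4
            · exact absurd h4 (by positivity)
            · exact h4
          linarith [hE S, he2]
        · show σm * S * (μ * R0 / σm - μ * S / (μ + β + ρ))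
            + σs * S * max 0 ((β * R0 / σm - β * S / (μ + β + ρ) - r * CI / μ) - CI)
            - (μ + β + ρ) * (μ * R0 / σm - μ * S / (μ + β + ρ)) = 0
          rw [max_eq_right (by linarith : (0:ℝ) ≤ (β * R0 / σm - β * S / (μ + β + ρ) - r * CI / μ) - CI)]
          have h := hF2 S
          rw [hQ, mul_zero] at h
          rcases mul_eq_zero.mp h with h4 | h4
          · exact absurd h4 (by positivity)
          · exact h4
        · show β * (μ * R0 / σm - μ * S / (μ + β + ρ))
            - min (r * (β * R0 / σm - β * S / (μ + β + ρ) - r * CI / μ)) (r * CI)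
            - μ * (β * R0 / σm - β * S / (μ + β + ρ) - r * CI / μ) = 0
          rw [min_eq_right (mul_le_mul_of_nonneg_left hIsgt.le hr.le)]
          exact he3id S
  -- the roots of the quadratic
  have hroots : ∀ S : ℝ, ((σm * S)^2 - (μ + β + ρ) * (R0 - p + q) * (σm * S)
      + (μ + β + ρ)^2 * (R0 * q) = 0 ↔ (0 ≤ D1 ∧ (S = S1 ∨ S = S2))) := by
    intro S
    constructor
    · intro h
      have hsq : D1 * (μ + β + ρ)^2 = ((μ + β + ρ) * (R0 - p + q) - 2 * (σm * S))^2 := by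
        rw [hD1e]; linear_combination (-4 : ℝ) * h
      have hD1nn : 0 ≤ D1 := by
        by_contra hcon
        push_neg at hcon
        nlinarith [hsq, sq_nonneg ((μ + β + ρ) * (R0 - p + q) - 2 * (σm * S)), pow_pos hK 2]
      have hD1eq : D1 = (((μ + β + ρ) * (R0 - p + q) - 2 * (σm * S)) / (μ + β + ρ))^2 := by
        rw [div_pow, eq_div_iff (by positivity : ((μ + β + ρ):ℝ)^2 ≠ 0)]
        linarith [hsq]
      have habs : Real.sqrt D1 = |(μ + β + ρ) * (R0 - p + q) - 2 * (σm * S)| / (μ + β + ρ) := by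
        rw [hD1eq, Real.sqrt_sq_eq_abs, abs_div, abs_of_pos hK]
      refine ⟨hD1nn, ?_⟩
      rcases le_or_gt (2 * (σm * S)) ((μ + β + ρ) * (R0 - p + q)) with hle | hlt
      · left
        have habs2 : Real.sqrt D1 = ((μ + β + ρ) * (R0 - p + q) - 2 * (σm * S)) / (μ + β + ρ) := by
          rw [habs, abs_of_nonneg (by linarith)]
        refine mul_left_cancel₀ (show (2 * σm : ℝ) ≠ 0 by positivity) ?_
        rw [hS1, habs2]
        field_simp
        ring
      · right
        have habs2 : Real.sqrt D1 = (2 * (σm * S) - (μ + β + ρ) * (R0 - p + q)) / (μ + β + ρ) := by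
          rw [habs, abs_of_neg (by linarith), neg_sub]
        refine mul_left_cancel₀ (show (2 * σm : ℝ) ≠ 0 by positivity) ?_
        rw [hS2, habs2]
        field_simp
        ring
    · rintro ⟨hD1nn, h | h⟩
      · rw [h]
        have hy : σm * S1 = (μ + β + ρ) * ((R0 - p + q) - Real.sqrt D1) / 2 := by
          rw [hS1]; field_simp
        rw [hy]
        have hsd : Real.sqrt D1 ^ 2 = D1 := Real.sq_sqrt hD1nn
        linear_combination ((μ + β + ρ)^2/4) * hsd + ((μ + β + ρ)^2/4) * hD1e
      · rw [h]
        have hy : σm * S2 = (μ + β + ρ) * ((R0 - p + q) + Real.sqrt D1) / 2 := by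
          rw [hS2]; field_simp
        rw [hy]
        have hsd : Real.sqrt D1 ^ 2 = D1 := Real.sq_sqrt hD1nn
        linear_combination ((μ + β + ρ)^2/4) * hsd + ((μ + β + ρ)^2/4) * hD1e
  -- root location facts
  have hsp2 : (Real.sqrt p)^2 = p := Real.sq_sqrt hp0.le
  have hsq2 : (Real.sqrt q)^2 = q := Real.sq_sqrt hq0.le
  have hspn : 0 ≤ Real.sqrt p := Real.sqrt_nonneg p
  have hsqn : 0 ≤ Real.sqrt q := Real.sqrt_nonneg q
  have hdn : 0 ≤ Real.sqrt D1 := Real.sqrt_nonneg D1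
  have hσS1 : σm * S1 = (μ + β + ρ) * (R0 - p + q - Real.sqrt D1) / 2 := by
    rw [hS1]; field_simp
  have hσS2 : σm * S2 = (μ + β + ρ) * (R0 - p + q + Real.sqrt D1) / 2 := by
    rw [hS2]; field_simp
  have hgid : (R0 - M - M*q - q)^2 - D1 = 4*(q*M)*(1 + M - R0) := by
    rw [hD1, hpMq]; ring
  have hcommon : (Real.sqrt p + Real.sqrt q)^2 ≤ R0 →
      0 ≤ D1 ∧ Real.sqrt D1 < R0 - p + q ∧ 0 < S1 ∧ 0 < S2 := by
    intro hge
    have hR0pq := aux_expand p q R0 (Real.sqrt p) (Real.sqrt q) hsp2 hsq2 hge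
    have hD1nn : 0 ≤ D1 :=
      aux_D1nn p q R0 D1 (Real.sqrt p) (Real.sqrt q) hsp2 hsq2 hspn hsqn hD1 hR0pq
    have hSigpos : 0 < R0 - p + q := by
      linarith [hR0pq, hq0, mul_nonneg hspn hsqn, hp0]
    have hdlt : Real.sqrt D1 < R0 - p + q := by
      refine (Real.sqrt_lt' hSigpos).2 ?_
      rw [hD1e]
      linarith [mul_pos hR0pos hq0]
    refine ⟨hD1nn, hdlt, ?_, ?_⟩
    · rw [hS1]; exact mul_pos (by positivity) (by linarith)
    · rw [hS2]; exact mul_pos (by positivity) (by linarith [hSigpos, hdn])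
  have hlt2 : R0 < 1 + M → 0 < R0 - M - M*q - q →
      σm * S1 < (μ + β + ρ) * (R0 - M) ∧ σm * S2 < (μ + β + ρ) * (R0 - M) := by
    intro hup hg
    have hdg : Real.sqrt D1 < R0 - M - M*q - q := by
      refine (Real.sqrt_lt' hg).2 ?_
      have h4 : 0 < 4*(q*M)*(1 + M - R0) :=
        mul_pos (mul_pos (by norm_num) (mul_pos hq0 hM0)) (by linarith)
      linarith [hgid, h4]
    constructor
    · rw [hσS1]
      have h5 : (μ + β + ρ) * (R0 - p + q - Real.sqrt D1) < (μ + β + ρ) * (2*(R0 - M)) := by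
        refine mul_lt_mul_of_pos_left ?_ hK
        rw [hpMq]; linarith [hdg, hdn]
      linarith
    · rw [hσS2]
      have h5 : (μ + β + ρ) * (R0 - p + q + Real.sqrt D1) < (μ + β + ρ) * (2*(R0 - M)) := by
        refine mul_lt_mul_of_pos_left ?_ hK
        rw [hpMq]; linarith [hdg]
      linarith
  refine ⟨?_, ?_, ?_, ?_⟩
  · -- Case 1 : (√p+√q)² ≤ R0 ≤ 1
    intro hge hle
    obtain ⟨hD1nn, hdlt, hS1pos, hS2pos⟩ := hcommon hge
    have hg1 : 0 < R0 - M - M*q - q :=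
      aux_g1 M q p R0 (Real.sqrt p) (Real.sqrt q) hq0 hM0 hsp2 hsq2 hspn hsqn hpMq hqM
        (aux_expand p q R0 (Real.sqrt p) (Real.sqrt q) hsp2 hsq2 hge)
    obtain ⟨hS1lt, hS2lt⟩ := hlt2 (by linarith [hM0]) hg1
    constructor
    · ext x
      simp only [Set.mem_setOf_eq, Set.mem_insert_iff, Set.mem_singleton_iff]
      rw [hchar x]
      constructor
      · rintro (⟨hxe, hgt, _⟩ | ⟨S, hS0, hSlt, hQ, hx⟩)
        · linarith
        · rcases ((hroots S).1 hQ).2 with rfl | rfl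
          · exact Or.inl (by rw [hE1]; exact hx)
          · exact Or.inr (by rw [hE2]; exact hx)
      · rintro (rfl | rfl)
        · exact Or.inr ⟨S1, hS1pos, hS1lt, (hroots S1).2 ⟨hD1nn, Or.inl rfl⟩, hE1⟩
        · exact Or.inr ⟨S2, hS2pos, hS2lt, (hroots S2).2 ⟨hD1nn, Or.inr rfl⟩, hE2⟩
    · intro hcontra
      rw [hEstar] at hcontra
      have h2 : 0 < μ * (R0 - 1) / σm := hcontra.2.1
      have h3 := mul_pos h2 hσm
      rw [div_mul_cancel₀ _ hσm.ne'] at h3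
      have h4 : μ * (R0 - 1) ≤ 0 :=
        mul_nonpos_of_nonneg_of_nonpos hμ.le (by linarith)
      linarith
  · -- Case 2 : 1 < R0 < 1 + M
    intro hgt hup
    have hge : (Real.sqrt p + Real.sqrt q)^2 ≤ R0 :=
      aux_sq1 (Real.sqrt p) (Real.sqrt q) R0 hpq1 hspn hsqn hgt
    obtain ⟨hD1nn, hdlt, hS1pos, hS2pos⟩ := hcommon hge
    obtain ⟨hS1lt, hS2lt⟩ := hlt2 hup (by linarith [hkey])
    ext x
    simp only [Set.mem_setOf_eq, Set.mem_insert_iff, Set.mem_singleton_iff]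
    rw [hchar x]
    constructor
    · rintro (⟨hxe, _, _⟩ | ⟨S, hS0, hSlt, hQ, hx⟩)
      · exact Or.inl hxe
      · rcases ((hroots S).1 hQ).2 with rfl | rfl
        · exact Or.inr (Or.inl (by rw [hE1]; exact hx))
        · exact Or.inr (Or.inr (by rw [hE2]; exact hx))
    · rintro (rfl | rfl | rfl)
      · exact Or.inl ⟨rfl, hgt, by linarith⟩
      · exact Or.inr ⟨S1, hS1pos, hS1lt, (hroots S1).2 ⟨hD1nn, Or.inl rfl⟩, hE1⟩
      · exact Or.inr ⟨S2, hS2pos, hS2lt, (hroots S2).2 ⟨hD1nn, Or.inr rfl⟩, hE2⟩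
  · -- Case 3 : R0 = 1 + M
    intro h3
    have hgt : 1 < R0 := by rw [h3]; linarith [hM0]
    have hge : (Real.sqrt p + Real.sqrt q)^2 ≤ R0 :=
      aux_sq1 (Real.sqrt p) (Real.sqrt q) R0 hpq1 hspn hsqn hgt
    obtain ⟨hD1nn, hdlt, hS1pos, hS2pos⟩ := hcommon hge
    have hd3 : Real.sqrt D1 = 1 - q - M*q := by
      have hh : D1 = (1 - q - M*q)^2 := by rw [hD1, hpMq, h3]; ring
      rw [hh, Real.sqrt_sq (by linarith [hkey, hM0])]
    have hS2K : σm * S2 = (μ + β + ρ) * (R0 - M) := by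
      rw [hσS2, hd3, hpMq, h3]; ring
    have hS1lt3 : σm * S1 < (μ + β + ρ) * (R0 - M) := by
      rw [hσS1, hd3, hpMq, h3]
      have h6 : (μ + β + ρ) * (M*q + q) < (μ + β + ρ) * 1 :=
        mul_lt_mul_of_pos_left (by linarith [hkey, hM0]) hK
      linarith [h6]
    ext x
    simp only [Set.mem_setOf_eq, Set.mem_insert_iff, Set.mem_singleton_iff]
    rw [hchar x]
    constructor
    · rintro (⟨hxe, _, _⟩ | ⟨S, hS0, hSlt, hQ, hx⟩)
      · exact Or.inl hxe
      · rcases ((hroots S).1 hQ).2 with rfl | rfl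
        · exact Or.inr (by rw [hE1]; exact hx)
        · rw [hS2K] at hSlt; exact absurd hSlt (lt_irrefl _)
    · rintro (rfl | rfl)
      · exact Or.inl ⟨rfl, hgt, le_of_eq h3⟩
      · exact Or.inr ⟨S1, hS1pos, hS1lt3, (hroots S1).2 ⟨hD1nn, Or.inl rfl⟩, hE1⟩
  · -- Case 4 : R0 > 1 + M
    intro h4
    have hgt : 1 < R0 := by linarith [hM0]
    have hge : (Real.sqrt p + Real.sqrt q)^2 ≤ R0 :=
      aux_sq1 (Real.sqrt p) (Real.sqrt q) R0 hpq1 hspn hsqn hgt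
    obtain ⟨hD1nn, hdlt, hS1pos, hS2pos⟩ := hcommon hge
    have hg4 : 0 < R0 - M - M*q - q := by linarith [hkey, hM0]
    have hgsq : (R0 - M - M*q - q)^2 < D1 := by
      have h5 : 0 < 4*(q*M)*(R0 - 1 - M) :=
        mul_pos (mul_pos (by norm_num) (mul_pos hq0 hM0)) (by linarith)
      linarith [hgid, h5]
    have hdgt : R0 - M - M*q - q < Real.sqrt D1 := by
      have hh := Real.sqrt_lt_sqrt (sq_nonneg (R0 - M - M*q - q)) hgsq
      rwa [Real.sqrt_sq hg4.le] at hh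
    have hS2nlt : ¬ (σm * S2 < (μ + β + ρ) * (R0 - M)) := by
      push_neg
      rw [hσS2]
      have h6 : (μ + β + ρ) * (2*(R0 - M)) ≤ (μ + β + ρ) * (R0 - p + q + Real.sqrt D1) := by
        refine mul_le_mul_of_nonneg_left ?_ hK.le
        rw [hpMq]; linarith [hdgt]
      linarith
    have hS1lt4 : σm * S1 < (μ + β + ρ) * (R0 - M) := by
      rw [hσS1]
      have h6 : (μ + β + ρ) * (R0 - p + q - Real.sqrt D1) < (μ + β + ρ) * (2*(R0 - M)) := by
        refine mul_lt_mul_of_pos_left ?_ hK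
        rw [hpMq]; linarith [hdn, hg4]
      linarith
    ext x
    simp only [Set.mem_setOf_eq, Set.mem_singleton_iff]
    rw [hchar x]
    constructor
    · rintro (⟨_, _, hle⟩ | ⟨S, hS0, hSlt, hQ, hx⟩)
      · linarith
      · rcases ((hroots S).1 hQ).2 with rfl | rfl
        · rw [hE1]; exact hx
        · exact absurd hSlt hS2nlt
    · rintro rfl
      exact Or.inr ⟨S1, hS1pos, hS1lt4, (hroots S1).2 ⟨hD1nn, Or.inl rfl⟩, hE1⟩
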